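/- Let U be a unitary on a Hilbert space, L_1, L_2 Pauli operators, and define L_1' = U L_1 U† L_1† and L_2' = L_2 L_1' L_2† L_1'†. If L_2' is a scalar multiple of the identity (±1), then L_1' commutes with L_2 up to sign; in particular, if for all Pauli logical operators L_2 the group commutator L_2' is ±I, then L_1' is a Pauli operator, and consequently U conjugates the Pauli L_1 into the Clifford group (U L_1 U† ∈ C^{(2)} applied to L_1, i.e., U ∈ C^{(3)} with respect to L_1 if L_1' ∈ C^{(2)}). -/

import Mathlib

/-- The Pauli operator `∏ⱼ Xⱼ^{aⱼ} Zⱼ^{bⱼ}` (up to phase) as a matrix on the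
computational basis of `n` qubits: it sends `|y⟩ ↦ (-1)^{b·y} |y + a⟩`. -/
noncomputable def pauliOp {n : ℕ} (a b : Fin n → ZMod 2) :
    Matrix (Fin n → ZMod 2) (Fin n → ZMod 2) ℂ :=
  fun x y => if x = y + a then (-1 : ℂ) ^ ((∑ j, b j * y j).val) else 0

/-- Membership in the `n`-qubit Pauli group: a phase `±1, ±i` times some
`X^a Z^b`. -/
def IsPauli {n : ℕ} (M : Matrix (Fin n → ZMod 2) (Fin n → ZMod 2) ℂ) : Prop :=
  ∃ (c : ℂ) (a b : Fin n → ZMod 2),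
    (c = 1 ∨ c = -1 ∨ c = Complex.I ∨ c = -Complex.I) ∧ M = c • pauliOp a b

namespace CliffordAux
variable {n : ℕ}

lemma addaa (x a : Fin n → ZMod 2) : x + a + a = x := by
  funext j; simp [add_assoc, CharTwo.add_self_eq_zero]

lemma eq_add_iff (x z a : Fin n → ZMod 2) : x = z + a ↔ z = x + a := by
  constructor <;> rintro rfl <;> rw [addaa]

lemma mulX_left (a : Fin n → ZMod 2) (M : Matrix (Fin n → ZMod 2) (Fin n → ZMod 2) ℂ)
    (x y : Fin n → ZMod 2) : (pauliOp a 0 * M) x y = M (x + a) y := by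
  rw [Matrix.mul_apply]
  simp only [pauliOp, Pi.zero_apply, zero_mul, Finset.sum_const_zero, ZMod.val_zero, pow_zero]
  simp_rw [eq_add_iff x]
  simp [Finset.sum_ite_eq']

lemma mulX_right (a : Fin n → ZMod 2) (M : Matrix (Fin n → ZMod 2) (Fin n → ZMod 2) ℂ)
    (x y : Fin n → ZMod 2) : (M * pauliOp a 0) x y = M x (y + a) := by
  rw [Matrix.mul_apply]
  simp only [pauliOp, Pi.zero_apply, zero_mul, Finset.sum_const_zero, ZMod.val_zero, pow_zero]
  simp [Finset.sum_ite_eq']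

lemma mulZ_left (b : Fin n → ZMod 2) (M : Matrix (Fin n → ZMod 2) (Fin n → ZMod 2) ℂ)
    (x y : Fin n → ZMod 2) :
    (pauliOp 0 b * M) x y = (-1 : ℂ) ^ ((∑ j, b j * x j).val) * M x y := by
  rw [Matrix.mul_apply]
  simp only [pauliOp, add_zero]
  simp [Finset.sum_ite_eq']

lemma mulZ_right (b : Fin n → ZMod 2) (M : Matrix (Fin n → ZMod 2) (Fin n → ZMod 2) ℂ)
    (x y : Fin n → ZMod 2) :
    (M * pauliOp 0 b) x y = M x y * (-1 : ℂ) ^ ((∑ j, b j * y j).val) := by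
  rw [Matrix.mul_apply]
  simp only [pauliOp, add_zero]
  simp [Finset.sum_ite_eq']

lemma star_apply' (a b : Fin n → ZMod 2) (x y : Fin n → ZMod 2) :
    star (pauliOp a b) x y = if y = x + a then (-1 : ℂ) ^ ((∑ j, b j * x j).val) else 0 := by
  rw [Matrix.star_apply, pauliOp]
  split <;> simp

lemma pauli_mul_star (a b : Fin n → ZMod 2) :
    pauliOp a b * star (pauliOp a b) = 1 := by
  ext x y
  rw [Matrix.mul_apply]
  simp_rw [star_apply', pauliOp, eq_add_iff x]
  rw [Finset.sum_eq_single (x + a)]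
  · rw [if_pos rfl, addaa]
    by_cases h : y = x
    · subst h
      rw [if_pos rfl, ← pow_add, Even.neg_one_pow ⟨_, rfl⟩, Matrix.one_apply_eq]
    · rw [if_neg h, mul_zero, Matrix.one_apply_ne (fun hc => h hc.symm)]
  · intro z _ hz
    rw [if_neg hz, zero_mul]
  · simp

lemma pauli_mem_unitary (a b : Fin n → ZMod 2) :
    pauliOp a b ∈ Matrix.unitaryGroup (Fin n → ZMod 2) ℂ :=
  Matrix.mem_unitaryGroup_iff.mpr (pauli_mul_star a b)

lemma isPauli_mem_unitary {M : Matrix (Fin n → ZMod 2) (Fin n → ZMod 2) ℂ}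
    (h : IsPauli M) : M ∈ Matrix.unitaryGroup (Fin n → ZMod 2) ℂ := by
  obtain ⟨c, a, b, hc, rfl⟩ := h
  rw [Matrix.mem_unitaryGroup_iff, star_smul, Matrix.smul_mul, Matrix.mul_smul,
    pauli_mul_star, smul_smul]
  have : c * star c = 1 := by
    rcases hc with rfl | rfl | rfl | rfl <;>
      simp [Complex.star_def, Complex.conj_I]
  rw [this, one_smul]

noncomputable def sgn (v : ZMod 2) : ℂ := (-1) ^ v.val

lemma zmod2 (v : ZMod 2) : v = 0 ∨ v = 1 := by revert v; decide

lemma sgn_zero : sgn (0 : ZMod 2) = 1 := by norm_num [sgn, ZMod.val_zero]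

lemma sgn_one : sgn (1 : ZMod 2) = -1 := by norm_num [sgn, ZMod.val_one]

lemma sgn_add (u v : ZMod 2) : sgn (u + v) = sgn u * sgn v := by
  rcases zmod2 u with rfl | rfl <;> rcases zmod2 v with rfl | rfl
  · rw [show (0+0 : ZMod 2) = 0 from by decide, sgn_zero, one_mul]
  · rw [show (0+1 : ZMod 2) = 1 from by decide, sgn_zero, one_mul]
  · rw [show (1+0 : ZMod 2) = 1 from by decide, sgn_zero, mul_one]
  · rw [show (1+1 : ZMod 2) = 0 from by decide, sgn_zero, sgn_one]; norm_num

lemma sgn_ne {u v : ZMod 2} (h : u ≠ v) : sgn u ≠ sgn v := by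
  rcases zmod2 u with rfl | rfl <;> rcases zmod2 v with rfl | rfl <;>
    simp_all [sgn_zero, sgn_one] <;> norm_num

lemma sgn_sum (S : Finset (Fin n)) (f : Fin n → ZMod 2) :
    ∏ j ∈ S, sgn (f j) = sgn (∑ j ∈ S, f j) := by
  induction S using Finset.induction_on with
  | empty => simp [sgn_zero]
  | insert _ _ hj ih => rw [Finset.prod_insert hj, Finset.sum_insert hj, sgn_add, ih]

lemma sum_single (j : Fin n) (y : Fin n → ZMod 2) :
    (∑ k, (Pi.single j (1 : ZMod 2) : Fin n → ZMod 2) k * y k) = y j := by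
  simp [Pi.single_apply, ite_mul, Finset.sum_ite_eq]

lemma key_step {M : Matrix (Fin n → ZMod 2) (Fin n → ZMod 2) ℂ}
    (a b : Fin n → ZMod 2)
    (HX : ∀ (j : Fin n) (x y : Fin n → ZMod 2),
      M (x + Pi.single j 1) y = sgn (b j) * M x (y + Pi.single j 1)) :
    ∀ S : Finset (Fin n), ∀ y : Fin n → ZMod 2, (∀ j, y j ≠ 0 → j ∈ S) →
      M (y + a) y = (∏ j ∈ S, sgn (b j * y j)) * M a 0 := by
  intro S
  induction S using Finset.induction_on with
  | empty =>
    intro y hy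
    have hy0 : y = 0 := funext fun j =>
      not_not.mp fun h => (Finset.notMem_empty j) (hy j h)
    subst hy0
    rw [zero_add, Finset.prod_empty, one_mul]
  | @insert j S hj ih =>
    intro y hy
    rcases zmod2 (y j) with h0 | h1
    · have hy' : ∀ k, y k ≠ 0 → k ∈ S := fun k hk =>
        (Finset.mem_insert.mp (hy k hk)).resolve_left (fun e => by subst e; exact hk h0)
      rw [Finset.prod_insert hj, h0, mul_zero, sgn_zero, one_mul, ih y hy']
    · set y' := Function.update y j 0 with hy'def
      have hyy : y = y' + Pi.single j 1 := by
        funext k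
        by_cases hk : k = j
        · subst hk
          simp [hy'def, Function.update_self, Pi.single_eq_same, h1]
        · simp [hy'def, Function.update_of_ne hk, Pi.single_eq_of_ne hk]
      have hy'S : ∀ k, y' k ≠ 0 → k ∈ S := by
        intro k hk
        have hkj : k ≠ j := by
          intro e; subst e; simp [hy'def, Function.update_self] at hk
        rw [hy'def, Function.update_of_ne hkj] at hk
        exact (Finset.mem_insert.mp (hy k hk)).resolve_left hkj
      calc M (y + a) y = M ((y' + a) + Pi.single j 1) (y' + Pi.single j 1) := by
            rw [hyy, add_right_comm]
        _ = sgn (b j) * M (y' + a) ((y' + Pi.single j 1) + Pi.single j 1) :=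
            HX j (y' + a) (y' + Pi.single j 1)
        _ = sgn (b j) * M (y' + a) y' := by rw [addaa]
        _ = sgn (b j) * ((∏ k ∈ S, sgn (b k * y' k)) * M a 0) := by rw [ih y' hy'S]
        _ = (∏ k ∈ insert j S, sgn (b k * y k)) * M a 0 := by
            rw [Finset.prod_insert hj, h1, mul_one, mul_assoc]
            congr 2
            exact Finset.prod_congr rfl fun k hk => by
              rw [hy'def, Function.update_of_ne (ne_of_mem_of_not_mem hk hj)]

lemma part2 {M : Matrix (Fin n → ZMod 2) (Fin n → ZMod 2) ℂ}
    (h : ∀ L₂, IsPauli L₂ → L₂ * M = M * L₂ ∨ L₂ * M = -(M * L₂)) :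
    ∃ (c : ℂ) (a b : Fin n → ZMod 2), M = c • pauliOp a b := by
  classical
  have hpauliX : ∀ j : Fin n, IsPauli (pauliOp (Pi.single j 1) (0 : Fin n → ZMod 2)) :=
    fun j => ⟨1, _, _, Or.inl rfl, (one_smul _ _).symm⟩
  have hpauliZ : ∀ j : Fin n, IsPauli (pauliOp (0 : Fin n → ZMod 2) (Pi.single j 1)) :=
    fun j => ⟨1, _, _, Or.inl rfl, (one_smul _ _).symm⟩
  -- choose a from Z-commutation signs
  have hZc : ∀ j : Fin n, ∃ ε : ZMod 2,
      ∀ x y, sgn (x j) * M x y = sgn ε * (sgn (y j) * M x y) := by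
    intro j
    rcases h _ (hpauliZ j) with hc | hc
    · refine ⟨0, fun x y => ?_⟩
      have := congrFun (congrFun hc x) y
      rw [mulZ_left, mulZ_right, sum_single, sum_single] at this
      rw [sgn_zero, one_mul]
      simp only [sgn]
      rw [this]; ring
    · refine ⟨1, fun x y => ?_⟩
      have := congrFun (congrFun hc x) y
      rw [mulZ_left, Matrix.neg_apply, mulZ_right, sum_single, sum_single] at this
      rw [sgn_one]
      simp only [sgn]
      rw [this]; ring
  choose a ha using hZc
  -- choose b from X-commutation signs
  have hXc : ∀ j : Fin n, ∃ ε : ZMod 2,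
      ∀ x y, M (x + Pi.single j 1) y = sgn ε * M x (y + Pi.single j 1) := by
    intro j
    rcases h _ (hpauliX j) with hc | hc
    · refine ⟨0, fun x y => ?_⟩
      have := congrFun (congrFun hc x) y
      rw [mulX_left, mulX_right] at this
      rw [sgn_zero, one_mul, this]
    · refine ⟨1, fun x y => ?_⟩
      have := congrFun (congrFun hc x) y
      rw [mulX_left, Matrix.neg_apply, mulX_right] at this
      rw [sgn_one, this, neg_one_mul]
  choose b hb using hXc
  refine ⟨M a 0, a, b, ?_⟩
  have hsupp : ∀ x y, x ≠ y + a → M x y = 0 := by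
    intro x y hxy
    obtain ⟨j, hj⟩ := Function.ne_iff.mp hxy
    have hj' : x j ≠ a j + y j := by
      intro e; exact hj (by rw [Pi.add_apply, e, add_comm])
    have h1 := ha j x y
    rw [← mul_assoc, ← sgn_add] at h1
    have h2 : (sgn (x j) - sgn (a j + y j)) * M x y = 0 := by
      rw [sub_mul, h1, sub_self]
    exact (mul_eq_zero.mp h2).resolve_left (sub_ne_zero.mpr (sgn_ne hj'))
  have hkey := key_step a b hb Finset.univ
  ext x y
  rw [Matrix.smul_apply, pauliOp]
  by_cases hx : x = y + a
  · subst hx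
    rw [if_pos rfl]
    have := hkey y (fun j _ => Finset.mem_univ j)
    rw [this, Finset.prod_congr rfl (fun j _ => rfl), sgn_sum]
    rw [smul_eq_mul, sgn]
    ring
  · rw [if_neg hx, hsupp x y hx, smul_zero]

lemma part1 {M L₂ : Matrix (Fin n → ZMod 2) (Fin n → ZMod 2) ℂ}
    (hM : star M * M = 1) (hL : star L₂ * L₂ = 1)
    (C : Matrix (Fin n → ZMod 2) (Fin n → ZMod 2) ℂ)
    (h : L₂ * M * star L₂ * star M = C) : L₂ * M = C * (M * L₂) := by
  have key : L₂ * M * star L₂ * star M * (M * L₂) = L₂ * M := by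
    simp only [mul_assoc]
    rw [← mul_assoc (star M) M L₂, hM, one_mul, hL, mul_one]
  rw [← key, h]

end CliffordAux

open CliffordAux in
/-- base step of the Clifford-hierarchy recursion: let `U` be a
unitary, `L₁` a Pauli, and `L₁' = U L₁ U† L₁†`.  For any Pauli `L₂`, if the
group commutator `L₂' = L₂ L₁' L₂† L₁'†` is `±1`, then `L₁'` commutes with `L₂`
up to that sign; and if the group commutator with *every* Pauli `L₂` is `±1`,
then `L₁'` is (a scalar multiple of) a Pauli operator — i.e. `U` conjugates the
Pauli `L₁` into the Clifford group. -/
theorem commutator_pauli_step {n : ℕ}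
    (U L₁ L₁' : Matrix (Fin n → ZMod 2) (Fin n → ZMod 2) ℂ)
    (hU : U ∈ Matrix.unitaryGroup (Fin n → ZMod 2) ℂ)
    (hL₁ : IsPauli L₁)
    (hL₁' : L₁' = U * L₁ * star U * star L₁) :
    (∀ L₂, IsPauli L₂ →
      (L₂ * L₁' * star L₂ * star L₁' = 1 → L₂ * L₁' = L₁' * L₂) ∧
      (L₂ * L₁' * star L₂ * star L₁' = -1 → L₂ * L₁' = -(L₁' * L₂))) ∧
    ((∀ L₂, IsPauli L₂ →
        L₂ * L₁' * star L₂ * star L₁' = 1 ∨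
        L₂ * L₁' * star L₂ * star L₁' = -1) →
      ∃ (c : ℂ) (a b : Fin n → ZMod 2), L₁' = c • pauliOp a b) := by
  have hL₁u := isPauli_mem_unitary hL₁
  have hM : L₁' ∈ Matrix.unitaryGroup (Fin n → ZMod 2) ℂ := by
    rw [hL₁']
    exact mul_mem (mul_mem (mul_mem hU hL₁u) (Unitary.star_mem hU)) (Unitary.star_mem hL₁u)
  have hMstar : star L₁' * L₁' = 1 := (Unitary.mem_iff.mp hM).1
  have main : ∀ L₂, IsPauli L₂ →
      (L₂ * L₁' * star L₂ * star L₁' = 1 → L₂ * L₁' = L₁' * L₂) ∧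
      (L₂ * L₁' * star L₂ * star L₁' = -1 → L₂ * L₁' = -(L₁' * L₂)) := by
    intro L₂ hP
    have hLstar : star L₂ * L₂ = 1 := (Unitary.mem_iff.mp (isPauli_mem_unitary hP)).1
    constructor
    · intro h
      rw [part1 hMstar hLstar 1 h, one_mul]
    · intro h
      rw [part1 hMstar hLstar (-1) h, neg_one_mul]
  refine ⟨main, fun hcomm => ?_⟩
  apply part2
  intro L₂ hP
  rcases hcomm L₂ hP with h | h
  · exact Or.inl ((main L₂ hP).1 h)
  · exact Or.inr ((main L₂ hP).2 h)
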